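/- Let T be a minimum bichromatic spanning tree of a finite bicolored point set S in the plane in general position, and let (r,b) be an edge of T whose endpoints form a closest bichromatic pair of S. Then (r,b) is not crossed by any other edge of T. -/

import Mathlib

open scoped Classical

noncomputable section

/-- Points in the Euclidean plane. -/
abbrev Pt : Type := EuclideanSpace ℝ (Fin 2)

/-- `S` is in general position: no three (distinct) points of `S` are collinear. -/
def GenPos (S : Finset Pt) : Prop :=
  ∀ p ∈ S, ∀ q ∈ S, ∀ r ∈ S, p ≠ q → p ≠ r → q ≠ r →
    ¬ Collinear ℝ ({p, q, r} : Set Pt)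

/-- The closed segments `[a,b]` and `[c,d]` cross: they share a point that is
interior to both segments. -/
def SegCross (a b c d : Pt) : Prop :=
  ∃ p : Pt, p ∈ openSegment ℝ a b ∧ p ∈ openSegment ℝ c d

/-- Two unordered edges (over vertices lying in the plane) cross. -/
def EdgeCross {S : Finset Pt} (e₁ e₂ : Sym2 ↥S) : Prop :=
  ∃ a b c d : ↥S, e₁ = s(a, b) ∧ e₂ = s(c, d) ∧ SegCross ↑a ↑b ↑c ↑d

/-- A (straight-line drawn) graph is plane if no two of its edges cross. -/
def PlaneGraph {S : Finset Pt} (G : SimpleGraph ↥S) : Prop :=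
  ∀ e₁ ∈ G.edgeSet, ∀ e₂ ∈ G.edgeSet, e₁ ≠ e₂ → ¬ EdgeCross e₁ e₂

/-- Every edge has one red (`true`) and one blue (`false`) endpoint. -/
def Bichromatic {S : Finset Pt} (col : Pt → Bool) (G : SimpleGraph ↥S) : Prop :=
  ∀ u v : ↥S, G.Adj u v → col ↑u ≠ col ↑v

/-- The Euclidean length of an unordered edge. -/
def edgeLen {S : Finset Pt} : Sym2 ↥S → ℝ :=
  Sym2.lift ⟨fun a b => dist (a : Pt) (b : Pt), fun _ _ => dist_comm _ _⟩

/-- The total Euclidean length of the edges of a graph drawn with straight-line edges. -/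
def graphLen {S : Finset Pt} (G : SimpleGraph ↥S) : ℝ :=
  ∑ᶠ e ∈ G.edgeSet, edgeLen e

/-- A bichromatic spanning tree of `S`. -/
def IsBST {S : Finset Pt} (col : Pt → Bool) (G : SimpleGraph ↥S) : Prop :=
  G.IsTree ∧ Bichromatic col G

/-- A minimum bichromatic spanning tree of `S`. -/
def IsMinBST {S : Finset Pt} (col : Pt → Bool) (G : SimpleGraph ↥S) : Prop :=
  IsBST col G ∧ ∀ G' : SimpleGraph ↥S, IsBST col G' → graphLen G ≤ graphLen G'


open SimpleGraph in
lemma reach_side_aux {V : Type*} {G : SimpleGraph V} {c d x z : V} (w : G.Walk x z) :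
    (G.deleteEdges {s(c,d)}).Reachable x z ∨ (G.deleteEdges {s(c,d)}).Reachable x c ∨
      (G.deleteEdges {s(c,d)}).Reachable x d := by
  induction w with
  | nil => exact Or.inl (Reachable.refl _)
  | @cons x y _ h _ ih =>
    by_cases he : s(x, y) = s(c, d)
    · rw [Sym2.eq_iff] at he
      rcases he with ⟨rfl, rfl⟩ | ⟨rfl, rfl⟩
      · exact Or.inr (Or.inl (Reachable.refl _))
      · exact Or.inr (Or.inr (Reachable.refl _))
    · have hadj : (G.deleteEdges {s(c,d)}).Adj x y := by
        rw [deleteEdges_adj]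
        exact ⟨h, by simpa using he⟩
      rcases ih with h' | h' | h'
      · exact Or.inl (hadj.reachable.trans h')
      · exact Or.inr (Or.inl (hadj.reachable.trans h'))
      · exact Or.inr (Or.inr (hadj.reachable.trans h'))

open SimpleGraph in
lemma reach_side {V : Type*} {G : SimpleGraph V} {c d x : V} (w : G.Walk x c) :
    (G.deleteEdges {s(c,d)}).Reachable x c ∨ (G.deleteEdges {s(c,d)}).Reachable x d := by
  rcases reach_side_aux (d := d) w with h | h | h
  · exact Or.inl h
  · exact Or.inl h
  · exact Or.inr h

lemma collinear_of_seg {x y z p : Pt} (hxy : x ≠ y)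
    (h1 : p ∈ openSegment ℝ x y) (h2 : p ∈ segment ℝ x z) :
    Collinear ℝ ({x, y, z} : Set Pt) := by
  obtain ⟨a, b, ha, hb, hab, hp⟩ := h1
  obtain ⟨t, s, ht, hs, hts, hq⟩ := h2
  have hpx : p - x = b • (y - x) := by
    have hA : a = 1 - b := by linarith
    rw [← hp, hA, smul_sub, sub_smul, one_smul]
    abel
  have hqx : p - x = s • (z - x) := by
    have hT : t = 1 - s := by linarith
    rw [← hq, hT, smul_sub, sub_smul, one_smul]
    abel
  have hs0 : s ≠ 0 := by
    rintro rfl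
    rw [zero_smul] at hqx
    rw [hqx] at hpx
    have h0 : y - x = 0 := by
      have := hpx.symm
      rwa [smul_eq_zero, or_iff_right (ne_of_gt hb)] at this
    exact hxy (sub_eq_zero.mp h0).symm
  rw [collinear_iff_of_mem (Set.mem_insert x {y, z})]
  refine ⟨y - x, fun q hq' => ?_⟩
  simp only [Set.mem_insert_iff, Set.mem_singleton_iff] at hq'
  rcases hq' with rfl | rfl | rfl
  · exact ⟨0, by simp⟩
  · exact ⟨1, by simp⟩
  · refine ⟨s⁻¹ * b, ?_⟩
    have h5 : s • (q - x) = b • (y - x) := by rw [← hqx, hpx]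
    have h6 : q - x = (s⁻¹ * b) • (y - x) := by
      calc q - x = s⁻¹ • (s • (q - x)) := by
              rw [smul_smul, inv_mul_cancel₀ hs0, one_smul]
        _ = s⁻¹ • (b • (y - x)) := by rw [h5]
        _ = (s⁻¹ * b) • (y - x) := (mul_smul _ _ _).symm
    have := sub_eq_iff_eq_add.mp h6
    simpa [vadd_eq_add, add_comm] using this

open SimpleGraph in
lemma tree_exchange {V : Type*} {G : SimpleGraph V} (hG : G.IsTree)
    {c d u v : V} (hcd : G.Adj c d)
    (hu : (G.deleteEdges {s(c,d)}).Reachable u c)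
    (hv : (G.deleteEdges {s(c,d)}).Reachable v d)
    (huv : u ≠ v) :
    ∃ G' : SimpleGraph V, G'.IsTree ∧
      G'.edgeSet = (G.edgeSet \ {s(c,d)}) ∪ {s(u,v)} ∧
      s(u,v) ∉ G.edgeSet \ {s(c,d)} := by
  have hbridge : ¬ (G \ fromEdgeSet {s(c,d)}).Reachable c d :=
    (isBridge_iff.mp (isAcyclic_iff_forall_adj_isBridge.mp hG.IsAcyclic hcd))
  have hbridge' : ¬ (G.deleteEdges {s(c,d)}).Reachable c d := hbridge
  have hnotin : s(u,v) ∉ G.edgeSet \ {s(c,d)} := by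
    intro hmem
    have hadj : (G.deleteEdges {s(c,d)}).Adj u v := by
      rw [deleteEdges_adj]
      exact ⟨G.mem_edgeSet.mp hmem.1, hmem.2⟩
    exact hbridge' (hu.symm.trans (hadj.reachable.trans hv))
  set A : Set (Sym2 V) := (G.edgeSet \ {s(c,d)}) ∪ {s(u,v)} with hA
  have hnd : ∀ e ∈ A, ¬ e.IsDiag := by
    intro e he
    rcases he with he | he
    · exact G.not_isDiag_of_mem_edgeSet he.1
    · rw [Set.mem_singleton_iff] at he
      subst he
      rw [Sym2.mk_isDiag_iff]
      exact huv
  have hEdge : (fromEdgeSet A).edgeSet = A := by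
    rw [edgeSet_fromEdgeSet]
    ext e
    simp only [Set.mem_diff, Set.mem_setOf_eq]
    exact ⟨fun h => h.1, fun h => ⟨h, hnd e h⟩⟩
  refine ⟨fromEdgeSet A, ?_, hEdge, hnotin⟩
  have hle : G.deleteEdges {s(c,d)} ≤ fromEdgeSet A := by
    intro x y hxy
    rw [deleteEdges_adj] at hxy
    rw [fromEdgeSet_adj]
    exact ⟨Or.inl ⟨G.mem_edgeSet.mpr hxy.1, hxy.2⟩, hxy.1.ne⟩
  have huvadj : (fromEdgeSet A).Adj u v := (fromEdgeSet_adj _).mpr ⟨Or.inr rfl, huv⟩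
  constructor
  · -- connected
    have hpre : ∀ x, (fromEdgeSet A).Reachable x u := by
      intro x
      obtain ⟨w⟩ := hG.isConnected.preconnected x c
      rcases reach_side (d := d) w with h | h
      · exact (h.mono hle).trans ((hu.mono hle).symm)
      · exact ((h.mono hle).trans ((hv.mono hle).symm)).trans huvadj.symm.reachable
    haveI : Nonempty V := hG.isConnected.nonempty
    exact Connected.mk (fun x y => (hpre x).trans (hpre y).symm)
  · -- acyclic
    intro z p hp
    by_cases hf : s(u,v) ∈ p.edges
    · have hcyc : (fromEdgeSet A).Adj u v ∧
          ((fromEdgeSet A) \ fromEdgeSet {s(u,v)}).Reachable u v :=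
        adj_and_reachable_delete_edges_iff_exists_cycle.mpr ⟨z, p, hp, hf⟩
      have hle2 : ((fromEdgeSet A) \ fromEdgeSet {s(u,v)}) ≤ G.deleteEdges {s(c,d)} := by
        intro x y hxy
        have h1 := hxy.1
        have h2 := hxy.2
        rw [fromEdgeSet_adj] at h1
        rcases h1.1 with hmem | hmem
        · rw [deleteEdges_adj]
          exact ⟨G.mem_edgeSet.mp hmem.1, hmem.2⟩
        · exact absurd ((fromEdgeSet_adj _).mpr ⟨hmem, h1.2⟩) h2
      exact hbridge' (hu.symm.trans ((hcyc.2.mono hle2).trans hv))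
    · have hsub : ∀ e ∈ p.edges, e ∈ G.edgeSet := by
        intro e hep
        have he' := p.edges_subset_edgeSet hep
        rw [hEdge] at he'
        rcases he' with h' | h'
        · exact h'.1
        · rw [Set.mem_singleton_iff] at h'
          subst h'
          exact absurd hep hf
      exact hG.IsAcyclic (p.transfer G hsub) (hp.transfer hsub)

lemma edgeLen_mk {S : Finset Pt} (a b : ↥S) : edgeLen s(a, b) = dist (a : Pt) (b : Pt) := rfl

open SimpleGraph in
lemma exchange_shorter {S : Finset Pt} {col : Pt → Bool} {T : SimpleGraph ↥S}
    (hT : IsMinBST col T) {c d u v : ↥S}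
    (hcd : T.Adj c d)
    (hu : (T.deleteEdges {s(c,d)}).Reachable u c)
    (hv : (T.deleteEdges {s(c,d)}).Reachable v d)
    (huv : (u : Pt) ≠ (v : Pt))
    (hcolor : col ↑u ≠ col ↑v)
    (hlen : dist (u : Pt) (v : Pt) < dist (c : Pt) (d : Pt)) : False := by
  have huv' : u ≠ v := fun h => huv (congrArg _ h)
  obtain ⟨G', htree, hE, hnotin⟩ := tree_exchange hT.1.1 hcd hu hv huv'
  have hbi : Bichromatic col G' := by
    intro x y hxy
    have hmem : s(x,y) ∈ G'.edgeSet := G'.mem_edgeSet.mpr hxy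
    rw [hE] at hmem
    rcases hmem with hm | hm
    · exact hT.1.2 x y (T.mem_edgeSet.mp hm.1)
    · rw [Set.mem_singleton_iff, Sym2.eq_iff] at hm
      rcases hm with ⟨rfl, rfl⟩ | ⟨rfl, rfl⟩
      · exact hcolor
      · exact hcolor.symm
  have hfin : (T.edgeSet \ {s(c,d)}).Finite := Set.toFinite _
  have hdisj1 : Disjoint (T.edgeSet \ {s(c,d)}) ({s(c,d)} : Set (Sym2 ↥S)) := by
    rw [Set.disjoint_singleton_right]; simp
  have hdisj2 : Disjoint (T.edgeSet \ {s(c,d)}) ({s(u,v)} : Set (Sym2 ↥S)) := by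
    rw [Set.disjoint_singleton_right]; exact hnotin
  have hsplit : T.edgeSet = (T.edgeSet \ {s(c,d)}) ∪ {s(c,d)} := by
    rw [Set.diff_union_self, Set.union_eq_self_of_subset_right]
    rw [Set.singleton_subset_iff]
    exact T.mem_edgeSet.mpr hcd
  have h1 : graphLen T = (∑ᶠ e ∈ (T.edgeSet \ {s(c,d)}), edgeLen e) + dist (c : Pt) (d : Pt) := by
    rw [graphLen]
    conv_lhs => rw [hsplit]
    rw [finsum_mem_union hdisj1 hfin (Set.finite_singleton _), finsum_mem_singleton, edgeLen_mk]
  have h2 : graphLen G' = (∑ᶠ e ∈ (T.edgeSet \ {s(c,d)}), edgeLen e) + dist (u : Pt) (v : Pt) := by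
    rw [graphLen, hE, finsum_mem_union hdisj2 hfin (Set.finite_singleton _),
      finsum_mem_singleton, edgeLen_mk]
  have hle := hT.2 G' ⟨htree, hbi⟩
  rw [h1, h2] at hle
  linarith

/-- If an edge `(r, b)` of a minimum bichromatic spanning tree `T`
of a bicolored point set in general position is a closest bichromatic pair, then no
other edge of `T` crosses it. -/
theorem minBST_closest_pair_edge_crossing_free
    (S : Finset Pt) (col : Pt → Bool) (hgp : GenPos S)
    (T : SimpleGraph ↥S) (hT : IsMinBST col T)
    (r b : ↥S) (hrb : T.Adj r b)
    (hcr : col ↑r = true) (hcb : col ↑b = false)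
    (hmin : ∀ r' ∈ S, ∀ b' ∈ S, col r' = true → col b' = false →
      dist (r : Pt) (b : Pt) ≤ dist r' b') :
    ∀ e ∈ T.edgeSet, e ≠ s(r, b) → ¬ EdgeCross s(r, b) e := by
  obtain ⟨⟨htree, hbi⟩, hmin'⟩ := hT
  intro e he hne hcross
  obtain ⟨a, b', c0, d0, h1, h2, hseg⟩ := hcross
  have hseg0 : SegCross ↑r ↑b ↑c0 ↑d0 := by
    rw [Sym2.eq_iff] at h1
    rcases h1 with ⟨rfl, rfl⟩ | ⟨rfl, rfl⟩
    · exact hseg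
    · obtain ⟨p, hp1, hp2⟩ := hseg
      exact ⟨p, by rwa [openSegment_symm], hp2⟩
  have hrb_ne : (r : Pt) ≠ (b : Pt) := by
    intro h
    rw [h, hcb] at hcr
    exact Bool.false_ne_true hcr
  have hmain : ∀ c d : ↥S, T.Adj c d → e = s(c,d) → col ↑c = true → col ↑d = false →
      SegCross ↑r ↑b ↑c ↑d → False := by
    intro c d hcd he' hc hd hsegcd
    obtain ⟨p, hp1, hp2⟩ := hsegcd
    have hrd_ne : (r : Pt) ≠ (d : Pt) := by
      intro h
      rw [h, hd] at hcr
      exact Bool.false_ne_true hcr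
    have hcb_ne : (c : Pt) ≠ (b : Pt) := by
      intro h
      rw [h, hcb] at hc
      exact Bool.false_ne_true hc
    by_cases hceq : (c : Pt) = (r : Pt)
    · have hdb : (d : Pt) ≠ (b : Pt) := by
        intro h
        apply hne
        rw [he', Subtype.ext hceq, Subtype.ext h]
      rw [hceq] at hp2
      have hcol3 := collinear_of_seg hrb_ne hp1 (openSegment_subset_segment ℝ _ _ hp2)
      exact hgp ↑r r.2 ↑b b.2 ↑d d.2 hrb_ne hrd_ne (fun h => hdb h.symm) hcol3
    by_cases hdeq : (d : Pt) = (b : Pt)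
    · have hp1' : p ∈ openSegment ℝ (b : Pt) (r : Pt) := by rwa [openSegment_symm]
      have hp2' : p ∈ openSegment ℝ (b : Pt) (c : Pt) := by
        rw [openSegment_symm]
        rwa [hdeq] at hp2
      have hcol3 := collinear_of_seg (fun h => hrb_ne h.symm) hp1'
        (openSegment_subset_segment ℝ _ _ hp2')
      exact hgp ↑b b.2 ↑r r.2 ↑c c.2 (fun h => hrb_ne h.symm) (fun h => hcb_ne h.symm)
        (fun h => hceq h.symm) hcol3
    · have hrpb := dist_add_dist_of_mem_segment (openSegment_subset_segment ℝ _ _ hp1)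
      have hcpd := dist_add_dist_of_mem_segment (openSegment_subset_segment ℝ _ _ hp2)
      have hstrict : dist (r : Pt) (d : Pt) < dist (r : Pt) p + dist p (d : Pt) := by
        rcases (dist_triangle (r : Pt) p (d : Pt)).lt_or_eq with h | h
        · exact h
        · exfalso
          have hw : Wbtw ℝ (r : Pt) p (d : Pt) := dist_add_dist_eq_iff.mp h.symm
          have hcol3 := collinear_of_seg hrb_ne hp1 hw.mem_segment
          exact hgp ↑r r.2 ↑b b.2 ↑d d.2 hrb_ne hrd_ne (fun hh => hdeq hh.symm) hcol3
      have htri2 := dist_triangle (c : Pt) p (b : Pt)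
      have hm1 := hmin ↑c c.2 ↑b b.2 hc hcb
      have hm2 := hmin ↑r r.2 ↑d d.2 hcr hd
      have hlen1 : dist (r : Pt) (d : Pt) < dist (c : Pt) (d : Pt) := by linarith
      have hlen2 : dist (c : Pt) (b : Pt) < dist (c : Pt) (d : Pt) := by linarith
      obtain ⟨w⟩ := htree.isConnected.preconnected r c
      rcases reach_side (d := d) w with hrc | hrd
      · exact exchange_shorter ⟨⟨htree, hbi⟩, hmin'⟩ hcd hrc (SimpleGraph.Reachable.refl d)
          hrd_ne (by rw [hcr, hd]; simp) hlen1
      · have hbd : (T.deleteEdges {s(c,d)}).Reachable b d := by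
          have hadj : (T.deleteEdges {s(c,d)}).Adj b r := by
            rw [SimpleGraph.deleteEdges_adj]
            refine ⟨hrb.symm, ?_⟩
            simp only [Set.mem_singleton_iff]
            intro hh
            apply hne
            rw [he', ← hh, Sym2.eq_swap]
          exact hadj.reachable.trans hrd
        exact exchange_shorter ⟨⟨htree, hbi⟩, hmin'⟩ hcd (SimpleGraph.Reachable.refl c) hbd
          hcb_ne (by rw [hc, hcb]; simp) hlen2
  have hadj0 : T.Adj c0 d0 := T.mem_edgeSet.mp (h2 ▸ he)
  have hcol0 : col ↑c0 ≠ col ↑d0 := hbi c0 d0 hadj0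
  by_cases hc0 : col ↑c0 = true
  · have hd0 : col ↑d0 = false := by
      have : col ↑d0 ≠ true := fun h => hcol0 (hc0.trans h.symm)
      exact Bool.eq_false_iff.mpr this
    exact hmain c0 d0 hadj0 h2 hc0 hd0 hseg0
  · have hc0' : col ↑c0 = false := Bool.eq_false_iff.mpr hc0
    have hd0' : col ↑d0 = true := by
      cases hB : col ↑d0
      · exact absurd (hc0'.trans hB.symm) hcol0
      · rfl
    refine hmain d0 c0 hadj0.symm ?_ hd0' hc0' ?_
    · rw [h2, Sym2.eq_swap]
    · obtain ⟨p, hp1, hp2⟩ := hseg0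
      exact ⟨p, hp1, by rwa [openSegment_symm]⟩
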